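/- Let r ≥ 2 and let S_3 ⊆ F_2^3 × F_2^r × F_2^r be the set S_3 = {((0,0,0), 0_r, 0_r)} ∪ {((0,0,1), h, 0_r) : h ≠ 0} ∪ {((0,1,0), 0_r, 0_r), ((0,1,1), 0_r, 0_r)} ∪ {((1,0,0), 0_r, h) : h ≠ 0} ∪ {((1,0,1), h, 0_r) : h ≠ 0} ∪ {((1,1,0), 0_r, 0_r), ((1,1,1), 0_r, 0_r)}. Let A be the matrix over F_2 with rows and columns indexed by F_2^3 × F_2^r × F_2^r, with A_{x,y} = 1 if x + y ∈ S_3 and 0 otherwise. Then the dimension over F_2 of the kernel of A (viewed as a linear map on the 2^{2r+3}-dimensional space of F_2-valued vectors indexed by F_2^3 × F_2^r × F_2^r) is at least 2^{2r+3} − 2^{2r} − 12·2^r; equivalently, the binary storage code 𝒞_{3,r} = ker(A) has rate at least 7/8 − (3/2)·2^{−r}. -/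

import Mathlib

/-- Membership in the generator set `S₃`: the set of columns of the parity-check
matrix `H₃`. -/
def inS3 {r : ℕ}
    (p : (ZMod 2 × ZMod 2 × ZMod 2) × (Fin r → ZMod 2) × (Fin r → ZMod 2)) : Prop :=
  (p.1 = (0, 0, 0) ∧ p.2.1 = 0 ∧ p.2.2 = 0) ∨
  (p.1 = (0, 0, 1) ∧ p.2.1 ≠ 0 ∧ p.2.2 = 0) ∨
  (p.1 = (0, 1, 0) ∧ p.2.1 = 0 ∧ p.2.2 = 0) ∨
  (p.1 = (0, 1, 1) ∧ p.2.1 = 0 ∧ p.2.2 = 0) ∨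
  (p.1 = (1, 0, 0) ∧ p.2.1 = 0 ∧ p.2.2 ≠ 0) ∨
  (p.1 = (1, 0, 1) ∧ p.2.1 ≠ 0 ∧ p.2.2 = 0) ∨
  (p.1 = (1, 1, 0) ∧ p.2.1 = 0 ∧ p.2.2 = 0) ∨
  (p.1 = (1, 1, 1) ∧ p.2.1 = 0 ∧ p.2.2 = 0)

instance {r : ℕ}
    (p : (ZMod 2 × ZMod 2 × ZMod 2) × (Fin r → ZMod 2) × (Fin r → ZMod 2)) :
    Decidable (inS3 p) := by
  unfold inS3; infer_instance

/-- char-2 helper -/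
lemma ch2_add_eq_iff {M : Type*} [AddCommGroup M] [Module (ZMod 2) M] (a b c : M) :
    a + b = c ↔ a = c + b := by
  have hbb : b + b = 0 := by
    have h2 : (2 : ZMod 2) = 0 := by decide
    have : (2 : ZMod 2) • b = 0 := by rw [h2, zero_smul]
    simpa [two_smul] using this
  constructor
  · intro h
    have : a + b + b = c + b := by rw [h]
    simpa [add_assoc, hbb] using this
  · intro h
    subst h
    simpa [add_assoc, hbb]

lemma ch2_add_eq_zero_iff {M : Type*} [AddCommGroup M] [Module (ZMod 2) M] (a b : M) :
    a + b = 0 ↔ a = b := by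
  rw [ch2_add_eq_iff]; simp

/-- key pointwise identity -/
lemma key3 (v : ZMod 2 × ZMod 2 × ZMod 2) (p q : Prop) [Decidable p] [Decidable q] :
    (if (v = (0,0,0) ∧ p ∧ q) ∨ (v = (0,0,1) ∧ ¬p ∧ q) ∨ (v = (0,1,0) ∧ p ∧ q) ∨
        (v = (0,1,1) ∧ p ∧ q) ∨ (v = (1,0,0) ∧ p ∧ ¬q) ∨ (v = (1,0,1) ∧ ¬p ∧ q) ∨
        (v = (1,1,0) ∧ p ∧ q) ∨ (v = (1,1,1) ∧ p ∧ q) then (1 : ZMod 2) else 0)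
    = (if p ∧ q then 1 else 0) + (if (v.2.1 = 0 ∧ v.2.2 = 1) ∧ q then 1 else 0)
      + (if v = (1,0,0) ∧ p then 1 else 0) := by
  obtain ⟨a, b, c⟩ := v
  by_cases hp : p <;> by_cases hq : q <;>
    simp only [hp, hq] <;> revert a b c <;> decide

/-- spanning family index -/
abbrev Idx (r : ℕ) :=
  ((Fin r → ZMod 2) × (Fin r → ZMod 2)) ⊕
  ((ZMod 2 × ZMod 2) × (Fin r → ZMod 2)) ⊕
  ((ZMod 2 × ZMod 2 × ZMod 2) × (Fin r → ZMod 2))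

def bfun (r : ℕ) : Idx r →
    (((ZMod 2 × ZMod 2 × ZMod 2) × (Fin r → ZMod 2) × (Fin r → ZMod 2)) → ZMod 2)
  | .inl k => fun x => if x.2.1 = k.1 ∧ x.2.2 = k.2 then 1 else 0
  | .inr (.inl ck) => fun x =>
      if (x.1.2.1 = ck.1.1 ∧ x.1.2.2 = ck.1.2) ∧ x.2.2 = ck.2 then 1 else 0
  | .inr (.inr vk) => fun x => if x.1 = vk.1 ∧ x.2.1 = vk.2 then 1 else 0

theorem storage_code_C3r_dim (r : ℕ) (hr : 2 ≤ r)
    (A : Matrix ((ZMod 2 × ZMod 2 × ZMod 2) × (Fin r → ZMod 2) × (Fin r → ZMod 2))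
         ((ZMod 2 × ZMod 2 × ZMod 2) × (Fin r → ZMod 2) × (Fin r → ZMod 2)) (ZMod 2))
    (hA : ∀ x y, A x y = if inS3 (x + y) then 1 else 0) :
    2 ^ (2 * r + 3) - 2 ^ (2 * r) - 12 * 2 ^ r ≤
      Module.finrank (ZMod 2) (LinearMap.ker A.mulVecLin) := by
  classical
  set W := Submodule.span (ZMod 2) (Set.range (bfun r)) with hW
  have hcol : ∀ y, (fun x => A x y) ∈ W := by
    intro y
    have hfun : (fun x => A x y) =
        bfun r (.inl (y.2.1, y.2.2)) +
        bfun r (.inr (.inl ((y.1.2.1, y.1.2.2 + 1), y.2.2))) +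
        bfun r (.inr (.inr (y.1 + (1, 0, 0), y.2.1))) := by
      funext x
      have e1 : ∀ z w : Fin r → ZMod 2, (z + w = 0) ↔ z = w := fun z w =>
        ch2_add_eq_zero_iff z w
      have f1 : ((x.1 + y.1).2.1 = 0) ↔ x.1.2.1 = y.1.2.1 := by
        rw [show (x.1 + y.1).2.1 = x.1.2.1 + y.1.2.1 from rfl]
        exact ch2_add_eq_zero_iff _ _
      have f2 : ((x.1 + y.1).2.2 = 1) ↔ x.1.2.2 = y.1.2.2 + 1 := by
        rw [show (x.1 + y.1).2.2 = x.1.2.2 + y.1.2.2 from rfl, ch2_add_eq_iff, add_comm]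
      have f3 : (x.1 + y.1 = ((1 : ZMod 2), (0 : ZMod 2), (0 : ZMod 2))) ↔
          x.1 = y.1 + ((1 : ZMod 2), (0 : ZMod 2), (0 : ZMod 2)) := by
        rw [ch2_add_eq_iff, add_comm]
      simp only [hA, Pi.add_apply, bfun, inS3, Prod.fst_add, Prod.snd_add, ne_eq, e1]
      rw [key3 (x.1 + y.1) (x.2.1 = y.2.1) (x.2.2 = y.2.2)]
      simp only [f1, f2, f3]
    rw [hfun]
    exact add_mem (add_mem (Submodule.subset_span ⟨_, rfl⟩)
      (Submodule.subset_span ⟨_, rfl⟩)) (Submodule.subset_span ⟨_, rfl⟩)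
  have hrange : LinearMap.range A.mulVecLin ≤ W := by
    rw [Matrix.range_mulVecLin]
    apply Submodule.span_le.mpr
    rintro _ ⟨y, rfl⟩
    exact hcol y
  have hWrank : Module.finrank (ZMod 2) W ≤ 2 ^ (2 * r) + 12 * 2 ^ r := by
    refine le_trans (finrank_span_le_card _) ?_
    have h1 : (Set.range (bfun r)).toFinset.card ≤ Fintype.card (Idx r) := by
      rw [Set.toFinset_card]; exact Fintype.card_range_le _
    refine h1.trans ?_
    simp only [Idx, Fintype.card_sum, Fintype.card_prod, Fintype.card_fun, ZMod.card,
      Fintype.card_fin]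
    have h2 : (2 : ℕ) ^ (2 * r) = 2 ^ r * 2 ^ r := by rw [two_mul, pow_add]
    rw [h2]
    exact le_of_eq (by ring)
  have hRrank : Module.finrank (ZMod 2) (LinearMap.range A.mulVecLin) ≤
      2 ^ (2 * r) + 12 * 2 ^ r :=
    le_trans (Submodule.finrank_mono hrange) hWrank
  have hrn := LinearMap.finrank_range_add_finrank_ker A.mulVecLin
  have hdom : Module.finrank (ZMod 2)
      (((ZMod 2 × ZMod 2 × ZMod 2) × (Fin r → ZMod 2) × (Fin r → ZMod 2)) → ZMod 2)
      = 2 ^ (2 * r + 3) := by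
    rw [Module.finrank_fintype_fun_eq_card]
    simp only [Fintype.card_prod, Fintype.card_fun, ZMod.card, Fintype.card_fin]
    ring
  rw [hdom] at hrn
  set a := 2 ^ r with ha
  have h2r : (2 : ℕ) ^ (2 * r) = a * a := by rw [two_mul, pow_add]
  have h2r3 : (2 : ℕ) ^ (2 * r + 3) = 8 * (a * a) := by rw [pow_add, h2r]; ring
  rw [h2r3] at hrn
  rw [h2r] at hRrank
  rw [h2r3, h2r]
  generalize a * a = b at hrn hRrank ⊢
  omega
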